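/- Let g be a finite-dimensional restricted Lie algebra over a field K of characteristic p, with a faithful over-restricted representation (V, θ), meaning θ(x)^{⌊(p+1)/2⌋} = 0 for all x ∈ N_p(g). Let G_V ≤ GL(V) be the group generated by the exponentials e^{θ(x)}, x ∈ N_p(g), and G_g ≤ GL(g) the group generated by the exponentials e^{ad(x)}, x ∈ N_p(g). Then the assignment e^{θ(x)} ↦ e^{ad(x)} extends to a well-defined surjective group homomorphism φ : G_V → G_g whose kernel is contained in the center of G_V and in Aut_g(V). -/

import Mathlib

/-- The truncated exponential `e(a) = ∑_{k=0}^{p-1} a^k / k!`. -/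
noncomputable def texp (K : Type*) [Field K] {A : Type*} [Ring A] [Algebra K A]
    (p : ℕ) (a : A) : A :=
  ∑ k ∈ Finset.range p, (Nat.factorial k : K)⁻¹ • a ^ k

attribute [local instance] LieRing.ofAssociativeRing

open Finset

section Alg
variable (K : Type*) [Field K] {p : ℕ} [Fact p.Prime] [CharP K p]
variable {A : Type*} [Ring A] [Algebra K A]

lemma fact_ne_zero {k : ℕ} (hk : k < p) : ((k.factorial : K)) ≠ 0 := by
  have hp : p.Prime := Fact.out
  rw [Ne, CharP.cast_eq_zero_iff K p]
  intro h
  exact absurd ((Nat.Prime.dvd_factorial hp).mp h) (by omega)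

lemma sum_triangle {M : Type*} [AddCommMonoid M] (n : ℕ) (f : ℕ → ℕ → M) :
    ∑ i ∈ range n, ∑ j ∈ range (n - i), f i j
      = ∑ k ∈ range n, ∑ i ∈ range (k + 1), f i (k - i) := by
  rw [Finset.sum_sigma' (range n), Finset.sum_sigma' (range n)]
  apply Finset.sum_nbij' (fun x => (⟨x.1 + x.2, x.1⟩ : Σ _ : ℕ, ℕ))
    (fun x => (⟨x.2, x.1 - x.2⟩ : Σ _ : ℕ, ℕ))
  · intro x hx
    simp only [Finset.mem_sigma, mem_range] at hx ⊢
    omega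
  · intro x hx
    simp only [Finset.mem_sigma, mem_range] at hx ⊢
    omega
  · rintro ⟨a, b⟩ hx
    simp only [Finset.mem_sigma, mem_range] at hx
    simp only [Sigma.mk.inj_iff, heq_eq_eq, true_and]
    omega
  · rintro ⟨a, b⟩ hx
    simp only [Finset.mem_sigma, mem_range] at hx
    simp only [Sigma.mk.inj_iff, heq_eq_eq]
    exact ⟨by omega, trivial⟩
  · intro x hx
    simp only [Finset.mem_sigma, mem_range] at hx
    simp only
    congr 1
    omega

end Alg

section Alg2
variable (K : Type*) [Field K] {p : ℕ} [Fact p.Prime] [CharP K p]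
variable {A : Type*} [Ring A] [Algebra K A]

lemma texp_neg_eq (a : A) :
    texp K p (-a) = ∑ j ∈ range p, ((-1 : K) ^ j * (j.factorial : K)⁻¹) • a ^ j := by
  unfold texp
  refine Finset.sum_congr rfl fun j _ => ?_
  rw [show (-a) = (-1 : K) • a by rw [neg_one_smul], smul_pow, smul_smul, mul_comm]

lemma choose_coeff {k i : ℕ} (hik : i ≤ k) (hk : k < p) :
    (i.factorial : K)⁻¹ * ((k - i).factorial : K)⁻¹
      = (k.factorial : K)⁻¹ * (k.choose i : K) := by
  have h := Nat.choose_mul_factorial_mul_factorial hik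
  have h' : ((k.choose i : K) * (i.factorial : K) * ((k - i).factorial : K))
      = (k.factorial : K) := by exact_mod_cast congrArg (Nat.cast : ℕ → K) h
  have h1 : (i.factorial : K) ≠ 0 := fact_ne_zero (p := p) K (k := i) (by omega)
  have h2 : ((k - i).factorial : K) ≠ 0 := fact_ne_zero (p := p) K (k := k - i) (by omega)
  have h3 : (k.factorial : K) ≠ 0 := fact_ne_zero K hk
  field_simp
  linear_combination -h'

lemma alt_sum_choose {k : ℕ} (hk : k ≠ 0) :
    ∑ i ∈ range (k + 1), ((-1 : K) ^ (k - i) * (k.choose i : K)) = 0 := by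
  have h0 : ∑ i ∈ range (k + 1), ((-1 : K) ^ i * (k.choose i : K)) = 0 := by
    have := Int.alternating_sum_range_choose_of_ne hk
    calc ∑ i ∈ range (k + 1), ((-1 : K) ^ i * (k.choose i : K))
        = ((∑ i ∈ range (k + 1), ((-1) ^ i * (k.choose i : ℤ)) : ℤ) : K) := by push_cast; ring
      _ = 0 := by rw [this]; simp
  rw [← Finset.sum_range_reflect] at h0
  rw [← h0]
  refine Finset.sum_congr rfl fun i hi => ?_
  rw [mem_range] at hi
  have hik : i ≤ k := by omega
  rw [show k + 1 - 1 - i = k - i from by omega, Nat.choose_symm hik]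

lemma texp_mul_texp_neg (a : A) (ha : a ^ p = 0) : texp K p a * texp K p (-a) = 1 := by
  have hp : 0 < p := (Fact.out : p.Prime).pos
  rw [texp_neg_eq, texp, Finset.sum_mul_sum]
  have h1 : ∀ i j : ℕ,
      ((i.factorial : K)⁻¹ • a ^ i) * (((-1 : K) ^ j * (j.factorial : K)⁻¹) • a ^ j)
      = ((i.factorial : K)⁻¹ * ((-1 : K) ^ j * (j.factorial : K)⁻¹)) • a ^ (i + j) := by
    intro i j
    rw [smul_mul_assoc, mul_smul_comm, smul_smul, pow_add]
  simp only [h1]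
  have h2 : ∀ i ∈ range p,
      (∑ j ∈ range p, ((i.factorial : K)⁻¹ * ((-1:K)^j * (j.factorial : K)⁻¹)) • a ^ (i+j))
      = ∑ j ∈ range (p - i), ((i.factorial : K)⁻¹ * ((-1:K)^j * (j.factorial : K)⁻¹)) • a ^ (i+j) := by
    intro i hi
    rw [mem_range] at hi
    refine (Finset.sum_subset (Finset.range_subset_range.mpr (by omega)) ?_).symm
    intro j hj hj'
    rw [mem_range] at hj hj'
    have hz : a ^ (i + j) = 0 := by
      rw [show i + j = p + (i + j - p) from by omega, pow_add, ha, zero_mul]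
    rw [hz, smul_zero]
  rw [Finset.sum_congr rfl h2, sum_triangle]
  have h3 : ∀ k ∈ range p,
      (∑ i ∈ range (k + 1), ((i.factorial : K)⁻¹ * ((-1:K)^(k-i) * ((k-i).factorial : K)⁻¹)) • a ^ (i + (k-i)))
      = (if k = 0 then (1:K) else 0) • a ^ k := by
    intro k hk
    rw [mem_range] at hk
    have : ∀ i ∈ range (k + 1),
        ((i.factorial : K)⁻¹ * ((-1:K)^(k-i) * ((k-i).factorial : K)⁻¹)) • a ^ (i + (k-i))
        = ((k.factorial : K)⁻¹ * ((-1:K)^(k-i) * (k.choose i : K))) • a ^ k := by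
      intro i hi
      rw [mem_range] at hi
      have hik : i ≤ k := by omega
      rw [show i + (k - i) = k from by omega]
      congr 1
      rw [show (i.factorial : K)⁻¹ * ((-1:K)^(k-i) * ((k-i).factorial : K)⁻¹)
          = ((i.factorial : K)⁻¹ * ((k-i).factorial : K)⁻¹) * (-1:K)^(k-i) from by ring,
        choose_coeff K hik hk]
      ring
    rw [Finset.sum_congr rfl this, ← Finset.sum_smul]
    congr 1
    rcases eq_or_ne k 0 with h | h
    · subst h; simp
    · rw [if_neg h, ← Finset.mul_sum, alt_sum_choose K h, mul_zero]
  rw [Finset.sum_congr rfl h3, Finset.sum_eq_single 0]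
  · simp
  · intro k hk hk0
    rw [if_neg hk0, zero_smul]
  · intro h
    exact absurd (mem_range.mpr hp) h

lemma LR_pow (a b : A) (k : ℕ) :
    ((LinearMap.mulLeft K a - LinearMap.mulRight K a) ^ k) b
      = ∑ i ∈ range (k + 1), ((-1 : K) ^ (k - i) * (k.choose i : K)) • (a ^ i * b * a ^ (k - i)) := by
  have hc : Commute (LinearMap.mulLeft K a) (-(LinearMap.mulRight K a)) :=
    (LinearMap.commute_mulLeft_right (R := K) a a).neg_right
  rw [sub_eq_add_neg, hc.add_pow]
  rw [LinearMap.sum_apply]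
  refine Finset.sum_congr rfl fun i hi => ?_
  rw [mem_range] at hi
  have h1 : (-(LinearMap.mulRight K a)) ^ (k - i)
      = ((-1 : K) ^ (k - i)) • (LinearMap.mulRight K a) ^ (k - i) := by
    rw [← neg_one_smul K (LinearMap.mulRight K a), smul_pow]
  rw [h1, LinearMap.pow_mulLeft, LinearMap.pow_mulRight]
  have h2 : ((k.choose i : Module.End K A)) b = (k.choose i : K) • b := by
    rw [Module.End.natCast_apply, Nat.cast_smul_eq_nsmul]
  rw [Module.End.mul_apply, Module.End.mul_apply, h2, LinearMap.map_smul, LinearMap.smul_apply,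
    LinearMap.map_smul, LinearMap.map_smul, LinearMap.mulRight_apply, LinearMap.mulLeft_apply]
  rw [smul_smul, ← mul_assoc (a ^ i), mul_comm ((k.choose i : K))]

lemma texp_conj (a b : A) (hm : a ^ ((p + 1) / 2) = 0) :
    texp K p a * b * texp K p (-a)
      = ∑ k ∈ range p, (k.factorial : K)⁻¹ •
          (((LinearMap.mulLeft K a - LinearMap.mulRight K a) ^ k) b) := by
  have hp : 0 < p := (Fact.out : p.Prime).pos
  have hpow : ∀ n, (p + 1) / 2 ≤ n → a ^ n = 0 := fun n hn => by
    rw [show n = (p + 1) / 2 + (n - (p + 1) / 2) from by omega, pow_add, hm, zero_mul]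
  rw [texp_neg_eq, texp, Finset.sum_mul, Finset.sum_mul_sum]
  have h1 : ∀ i j : ℕ,
      (((i.factorial : K)⁻¹ • a ^ i) * b) * (((-1 : K) ^ j * (j.factorial : K)⁻¹) • a ^ j)
      = ((i.factorial : K)⁻¹ * ((-1 : K) ^ j * (j.factorial : K)⁻¹)) • (a ^ i * b * a ^ j) := by
    intro i j
    rw [smul_mul_assoc, smul_mul_assoc, mul_smul_comm, smul_smul]
  simp only [h1]
  have h2 : ∀ i ∈ range p,
      (∑ j ∈ range p, ((i.factorial : K)⁻¹ * ((-1:K)^j * (j.factorial : K)⁻¹)) • (a ^ i * b * a ^ j))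
      = ∑ j ∈ range (p - i), ((i.factorial : K)⁻¹ * ((-1:K)^j * (j.factorial : K)⁻¹)) • (a ^ i * b * a ^ j) := by
    intro i hi
    rw [mem_range] at hi
    refine (Finset.sum_subset (Finset.range_subset_range.mpr (by omega)) ?_).symm
    intro j hj hj'
    rw [mem_range] at hj hj'
    have hz : a ^ i * b * a ^ j = 0 := by
      rcases le_or_gt ((p + 1) / 2) i with h | h
      · rw [hpow i h, zero_mul, zero_mul]
      · rw [hpow j (by omega), mul_zero]
    rw [hz, smul_zero]
  rw [Finset.sum_congr rfl h2, sum_triangle]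
  refine Finset.sum_congr rfl fun k hk => ?_
  rw [mem_range] at hk
  rw [LR_pow, Finset.smul_sum]
  refine Finset.sum_congr rfl fun i hi => ?_
  rw [mem_range] at hi
  have hik : i ≤ k := by omega
  rw [smul_smul]
  congr 1
  rw [show (i.factorial : K)⁻¹ * ((-1:K)^(k-i) * ((k-i).factorial : K)⁻¹)
      = ((i.factorial : K)⁻¹ * ((k-i).factorial : K)⁻¹) * (-1:K)^(k-i) from by ring,
    choose_coeff K hik hk]
  ring
end Alg2

section Rep
open LieAlgebra
variable {K : Type*} [Field K] {p : ℕ} [Fact p.Prime] [CharP K p]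
variable {g : Type*} [LieRing g] [LieAlgebra K g]
variable {V : Type*} [AddCommGroup V] [Module K V]

lemma theta_ad_pow (θ : g →ₗ⁅K⁆ Module.End K V) (x y : g) (k : ℕ) :
    θ (((ad K g x) ^ k) y)
      = ((LinearMap.mulLeft K (θ x) - LinearMap.mulRight K (θ x)) ^ k) (θ y) := by
  induction k with
  | zero => simp
  | succ k ih =>
    rw [pow_succ', Module.End.mul_apply, LieAlgebra.ad_apply, LieHom.map_lie, Ring.lie_def, ih,
      pow_succ', Module.End.mul_apply, LinearMap.sub_apply, LinearMap.mulLeft_apply,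
      LinearMap.mulRight_apply]

lemma conj_theta (θ : g →ₗ⁅K⁆ Module.End K V) (x y : g) (hx : θ x ^ ((p + 1) / 2) = 0) :
    texp K p (θ x) * θ y * texp K p (-(θ x)) = θ ((texp K p (ad K g x)) y) := by
  rw [texp_conj K _ _ hx]
  have hθ : ∀ z, θ z = θ.toLinearMap z := fun _ => rfl
  conv_rhs => rw [hθ, texp, LinearMap.sum_apply, map_sum]
  refine Finset.sum_congr rfl fun k _ => ?_
  rw [LinearMap.smul_apply, map_smul]
  congr 1
  exact (theta_ad_pow θ x y k).symm

end Rep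

section Main
open LieAlgebra
variable {K : Type*} [Field K] {p : ℕ} [Fact p.Prime] [CharP K p]
variable {g : Type*} [LieRing g] [LieAlgebra K g]
variable {V : Type*} [AddCommGroup V] [Module K V]

lemma val_inv_eq {M : Type*} [Monoid M] (u : Mˣ) (b : M) (h : (u : M) * b = 1) :
    ((u⁻¹ : Mˣ) : M) = b := by
  calc ((u⁻¹ : Mˣ) : M) = ↑u⁻¹ * (↑u * b) := by rw [h, mul_one]
    _ = (↑u⁻¹ * ↑u) * b := (mul_assoc _ _ _).symm
    _ = b := by rw [Units.inv_mul, one_mul]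

variable (θ : g →ₗ⁅K⁆ Module.End K V)

def ConjP (u : (Module.End K V)ˣ) : Prop :=
  ∀ y : g, ∃ z : g,
    (u : Module.End K V) * θ y * ((u⁻¹ : (Module.End K V)ˣ) : Module.End K V) = θ z

noncomputable def Fmap (u : (Module.End K V)ˣ) (y : g) : g :=
  Function.invFun θ
    ((u : Module.End K V) * θ y * ((u⁻¹ : (Module.End K V)ˣ) : Module.End K V))

variable {θ}

lemma theta_Fmap (hfaith : Function.Injective θ) {u : (Module.End K V)ˣ}
    (hu : ConjP θ u) (y : g) :
    θ (Fmap θ u y)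
      = (u : Module.End K V) * θ y * ((u⁻¹ : (Module.End K V)ˣ) : Module.End K V) := by
  obtain ⟨z, hz⟩ := hu y
  rw [Fmap, hz, Function.leftInverse_invFun hfaith z]

lemma ConjP.one' : ConjP θ (1 : (Module.End K V)ˣ) := fun y =>
  ⟨y, by simp⟩

lemma ConjP.mul' {u v : (Module.End K V)ˣ} (hu : ConjP θ u) (hv : ConjP θ v) :
    ConjP θ (u * v) := by
  intro y
  obtain ⟨z, hz⟩ := hv y
  obtain ⟨w, hw⟩ := hu z
  refine ⟨w, ?_⟩
  rw [mul_inv_rev, Units.val_mul, Units.val_mul, ← hw, ← hz]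
  simp only [mul_assoc]

lemma Fmap_one (hfaith : Function.Injective θ) (y : g) :
    Fmap θ (1 : (Module.End K V)ˣ) y = y := by
  apply hfaith
  rw [theta_Fmap hfaith ConjP.one']
  simp

lemma Fmap_mul (hfaith : Function.Injective θ) {u v : (Module.End K V)ˣ}
    (hu : ConjP θ u) (hv : ConjP θ v) (y : g) :
    Fmap θ (u * v) y = Fmap θ u (Fmap θ v y) := by
  apply hfaith
  rw [theta_Fmap hfaith (hu.mul' hv), theta_Fmap hfaith hu, theta_Fmap hfaith hv,
    mul_inv_rev, Units.val_mul, Units.val_mul]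
  simp only [mul_assoc]

noncomputable def Lmap (hfaith : Function.Injective θ) (u : (Module.End K V)ˣ)
    (hu : ConjP θ u) : Module.End K g where
  toFun := Fmap θ u
  map_add' y z := by
    apply hfaith
    rw [theta_Fmap hfaith hu, map_add, map_add, theta_Fmap hfaith hu, theta_Fmap hfaith hu,
      mul_add, add_mul]
  map_smul' c y := by
    apply hfaith
    simp only [RingHom.id_apply]
    rw [theta_Fmap hfaith hu, map_smul, map_smul, theta_Fmap hfaith hu,
      mul_smul_comm, smul_mul_assoc]

lemma Lmap_apply (hfaith : Function.Injective θ) (u : (Module.End K V)ˣ)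
    (hu : ConjP θ u) (y : g) : Lmap hfaith u hu y = Fmap θ u y := rfl

noncomputable def Umap (hfaith : Function.Injective θ) (u : (Module.End K V)ˣ)
    (hu : ConjP θ u) (hu' : ConjP θ u⁻¹) : (Module.End K g)ˣ where
  val := Lmap hfaith u hu
  inv := Lmap hfaith u⁻¹ hu'
  val_inv := by
    refine LinearMap.ext fun y => ?_
    show Fmap θ u (Fmap θ u⁻¹ y) = y
    rw [← Fmap_mul hfaith hu hu', mul_inv_cancel, Fmap_one hfaith]
  inv_val := by
    refine LinearMap.ext fun y => ?_
    show Fmap θ u⁻¹ (Fmap θ u⁻¹⁻¹ y) = y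
    rw [← Fmap_mul hfaith hu' (by rwa [inv_inv]), mul_inv_cancel, Fmap_one hfaith]

end Main

/-- Let `(V, θ)` be a faithful over-restricted representation of a finite-dimensional
restricted Lie algebra `(g, pmap)`, `G_V ≤ GL(V)` the group generated by the
exponentials `e^{θ(x)}`, `x ∈ N_p(g)`, and `G_g ≤ GL(g)` the group generated by the
exponentials `e^{ad(x)}`, `x ∈ N_p(g)`.  Then `e^{θ(x)} ↦ e^{ad(x)}` extends to a
surjective group homomorphism `φ : G_V → G_g` whose kernel is central in `G_V` and
consists of `g`-module automorphisms of `V`. -/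
theorem stmt_12 (K : Type*) [Field K] (p : ℕ) [Fact p.Prime] [CharP K p]
    (g : Type*) [LieRing g] [LieAlgebra K g] [FiniteDimensional K g]
    (V : Type*) [AddCommGroup V] [Module K V] [FiniteDimensional K V]
    (pmap : g → g) (θ : g →ₗ⁅K⁆ Module.End K V)
    (hfaith : Function.Injective θ)
    (hres : ∀ x : g, θ (pmap x) = θ x ^ p)
    (hadres : ∀ x : g, pmap x = 0 → (LieAlgebra.ad K g x) ^ p = 0)
    (hover : ∀ x : g, pmap x = 0 → θ x ^ ((p + 1) / 2) = 0)
    (GV : Subgroup (Module.End K V)ˣ)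
    (hGV : GV = Subgroup.closure
      {u : (Module.End K V)ˣ | ∃ x : g, pmap x = 0 ∧ (u : Module.End K V) = texp K p (θ x)})
    (Gg : Subgroup (Module.End K g)ˣ)
    (hGg : Gg = Subgroup.closure
      {u : (Module.End K g)ˣ | ∃ x : g, pmap x = 0 ∧
        (u : Module.End K g) = texp K p (LieAlgebra.ad K g x)}) :
    ∃ φ : GV →* Gg,
      Function.Surjective φ ∧
      (∀ (u : GV) (x : g), pmap x = 0 →
        ((u : (Module.End K V)ˣ) : Module.End K V) = texp K p (θ x) →
        ((φ u : (Module.End K g)ˣ) : Module.End K g) = texp K p (LieAlgebra.ad K g x)) ∧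
      (∀ u : GV, φ u = 1 →
        (∀ v : GV, u * v = v * u) ∧
        (∀ y : g, ((u : (Module.End K V)ˣ) : Module.End K V) * θ y =
          θ y * ((u : (Module.End K V)ˣ) : Module.End K V))) := by
  subst hGV hGg
  have hp : 0 < p := (Fact.out : p.Prime).pos
  have hpowp : ∀ x : g, pmap x = 0 → θ x ^ p = 0 := fun x hx => by
    rw [show p = (p + 1) / 2 + (p - (p + 1) / 2) from by omega, pow_add, hover x hx, zero_mul]
  have hinvval : ∀ (u : (Module.End K V)ˣ) (x : g), pmap x = 0 →
      ((u : (Module.End K V)ˣ) : Module.End K V) = texp K p (θ x) →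
      ((u⁻¹ : (Module.End K V)ˣ) : Module.End K V) = texp K p (-(θ x)) := fun u x hx hval =>
    val_inv_eq u _ (by rw [hval]; exact texp_mul_texp_neg K _ (hpowp x hx))
  set SV : Set (Module.End K V)ˣ :=
    {u : (Module.End K V)ˣ | ∃ x : g, pmap x = 0 ∧ (u : Module.End K V) = texp K p (θ x)}
    with hSV
  set Sg : Set (Module.End K g)ˣ :=
    {u : (Module.End K g)ˣ | ∃ x : g, pmap x = 0 ∧
      (u : Module.End K g) = texp K p (LieAlgebra.ad K g x)} with hSg
  have hQ : ∀ u : (Module.End K V)ˣ, u ∈ Subgroup.closure SV → ConjP θ u ∧ ConjP θ u⁻¹ := by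
    intro u hu
    refine Subgroup.closure_induction ?_ ?_ ?_ ?_ hu
    · rintro w ⟨x, hx, hval⟩
      have hxm := hover x hx
      have hw_inv := hinvval w x hx hval
      constructor
      · intro y
        exact ⟨texp K p (LieAlgebra.ad K g x) y, by
          rw [hval, hw_inv]; exact conj_theta θ x y hxm⟩
      · intro y
        refine ⟨texp K p (LieAlgebra.ad K g (-x)) y, ?_⟩
        have h1 : ((w⁻¹ : (Module.End K V)ˣ) : Module.End K V) = texp K p (θ (-x)) := by
          rw [hw_inv, map_neg]
        have h2 : (((w⁻¹)⁻¹ : (Module.End K V)ˣ) : Module.End K V) = texp K p (-(θ (-x))) := by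
          rw [inv_inv, hval, map_neg, neg_neg]
        rw [h1, h2]
        exact conj_theta θ (-x) y (by rw [map_neg, neg_pow, hxm, mul_zero])
    · exact ⟨ConjP.one', by rw [inv_one]; exact ConjP.one'⟩
    · rintro a b _ _ ⟨ha, ha'⟩ ⟨hb, hb'⟩
      exact ⟨ha.mul' hb, by rw [mul_inv_rev]; exact hb'.mul' ha'⟩
    · rintro a _ ⟨ha, ha'⟩
      exact ⟨ha', by rwa [inv_inv]⟩
  let ψ : Subgroup.closure SV →* (Module.End K g)ˣ :=
    { toFun := fun u => Umap hfaith ↑u (hQ ↑u u.2).1 (hQ ↑u u.2).2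
      map_one' := by
        apply Units.ext
        refine LinearMap.ext fun y => ?_
        show Fmap θ ((1 : Subgroup.closure SV) : (Module.End K V)ˣ) y = y
        rw [OneMemClass.coe_one]
        exact Fmap_one hfaith y
      map_mul' := fun u v => by
        apply Units.ext
        refine LinearMap.ext fun y => ?_
        show Fmap θ (((u * v : Subgroup.closure SV)) : (Module.End K V)ˣ) y
          = Fmap θ ↑u (Fmap θ ↑v y)
        rw [Subgroup.coe_mul]
        exact Fmap_mul hfaith (hQ ↑u u.2).1 (hQ ↑v v.2).1 y }
  have hspec : ∀ (u : Subgroup.closure SV) (x : g), pmap x = 0 →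
      ((u : (Module.End K V)ˣ) : Module.End K V) = texp K p (θ x) →
      ((ψ u : (Module.End K g)ˣ) : Module.End K g) = texp K p (LieAlgebra.ad K g x) := by
    intro u x hx hval
    refine LinearMap.ext fun y => ?_
    show Fmap θ ↑u y = texp K p (LieAlgebra.ad K g x) y
    apply hfaith
    rw [theta_Fmap hfaith (hQ ↑u u.2).1, hval, hinvval ↑u x hx hval]
    exact conj_theta θ x y (hover x hx)
  have hmem : ∀ u : Subgroup.closure SV, ψ u ∈ Subgroup.closure Sg := by
    intro u
    refine Subgroup.closure_induction
      (p := fun w hw => ψ ⟨w, hw⟩ ∈ Subgroup.closure Sg) ?_ ?_ ?_ ?_ u.2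
    · intro w hwS
      show ψ ⟨w, Subgroup.subset_closure hwS⟩ ∈ Subgroup.closure Sg
      obtain ⟨x, hx, hval⟩ := id hwS
      exact Subgroup.subset_closure
        ⟨x, hx, hspec ⟨w, Subgroup.subset_closure hwS⟩ x hx hval⟩
    · show ψ ⟨1, Subgroup.one_mem _⟩ ∈ Subgroup.closure Sg
      rw [show (⟨1, Subgroup.one_mem _⟩ : Subgroup.closure SV) = 1 from rfl, map_one]
      exact Subgroup.one_mem _
    · intro a b ha hb iha ihb
      show ψ ⟨a * b, Subgroup.mul_mem _ ha hb⟩ ∈ Subgroup.closure Sg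
      rw [show (⟨a * b, Subgroup.mul_mem _ ha hb⟩ : Subgroup.closure SV)
        = ⟨a, ha⟩ * ⟨b, hb⟩ from rfl, map_mul]
      exact Subgroup.mul_mem _ iha ihb
    · intro a ha iha
      show ψ ⟨a⁻¹, Subgroup.inv_mem _ ha⟩ ∈ Subgroup.closure Sg
      rw [show (⟨a⁻¹, Subgroup.inv_mem _ ha⟩ : Subgroup.closure SV)
        = (⟨a, ha⟩ : Subgroup.closure SV)⁻¹ from rfl, map_inv]
      exact Subgroup.inv_mem _ iha
  refine ⟨ψ.codRestrict _ hmem, ?_, ?_, ?_⟩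
  · -- surjectivity
    intro w
    have key : ∀ w' (hw' : w' ∈ Subgroup.closure Sg),
        ∃ u : Subgroup.closure SV, ψ u = w' := by
      intro w' hw'
      refine Subgroup.closure_induction (p := fun w' _ => ∃ u, ψ u = w') ?_ ?_ ?_ ?_ hw'
      · rintro w'' ⟨x, hx, hval⟩
        have hval2 : (texp K p (-(θ x))) * texp K p (θ x) = 1 := by
          have := texp_mul_texp_neg K (-(θ x)) (by rw [neg_pow, hpowp x hx, mul_zero])
          rwa [neg_neg] at this
        refine ⟨⟨⟨texp K p (θ x), texp K p (-(θ x)),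
          texp_mul_texp_neg K _ (hpowp x hx), hval2⟩,
          Subgroup.subset_closure ⟨x, hx, rfl⟩⟩, ?_⟩
        apply Units.ext
        rw [hspec _ x hx rfl, hval]
      · exact ⟨1, map_one ψ⟩
      · rintro a b _ _ ⟨ua, hua⟩ ⟨ub, hub⟩
        exact ⟨ua * ub, by rw [map_mul, hua, hub]⟩
      · rintro a _ ⟨ua, hua⟩
        exact ⟨ua⁻¹, by rw [map_inv, hua]⟩
    obtain ⟨u, hu⟩ := key ↑w w.2
    exact ⟨u, Subtype.ext hu⟩
  · -- correspondence on generators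
    intro u x hx hval
    exact hspec u x hx hval
  · -- kernel
    intro u hu1
    have hψ1 : ψ u = 1 := by
      have := congrArg Subtype.val hu1
      exact this
    have hfix : ∀ y : g, Fmap θ (↑u : (Module.End K V)ˣ) y = y := by
      intro y
      have h := congrArg (fun e : (Module.End K g)ˣ => (e : Module.End K g) y) hψ1
      have h' : ((ψ u : (Module.End K g)ˣ) : Module.End K g) y = y := by simpa using h
      exact h'
    have hcomm : ∀ y : g, ((u : (Module.End K V)ˣ) : Module.End K V) * θ y
        = θ y * ((u : (Module.End K V)ˣ) : Module.End K V) := by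
      intro y
      have h1 : ((u : (Module.End K V)ˣ) : Module.End K V) * θ y
          * (((u : (Module.End K V)ˣ)⁻¹ : (Module.End K V)ˣ) : Module.End K V) = θ y := by
        rw [← theta_Fmap hfaith (hQ ↑u u.2).1 y, hfix y]
      calc ((u : (Module.End K V)ˣ) : Module.End K V) * θ y
          = (((u : (Module.End K V)ˣ) : Module.End K V) * θ y
            * (((u : (Module.End K V)ˣ)⁻¹ : (Module.End K V)ˣ) : Module.End K V))
            * ((u : (Module.End K V)ˣ) : Module.End K V) := by
            rw [mul_assoc _ _ ((u : (Module.End K V)ˣ) : Module.End K V), Units.inv_mul, mul_one]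
        _ = θ y * ((u : (Module.End K V)ˣ) : Module.End K V) := by rw [h1]
    refine ⟨?_, hcomm⟩
    intro v
    have hcent : ∀ w' ∈ Subgroup.closure SV, Commute (↑u : (Module.End K V)ˣ) w' := by
      intro w' hw'
      refine Subgroup.closure_induction (p := fun w' _ => Commute (↑u : (Module.End K V)ˣ) w')
        ?_ ?_ ?_ ?_ hw'
      · rintro w'' ⟨x, hx, hval⟩
        apply Units.ext
        rw [Units.val_mul, Units.val_mul, hval]
        have hc : Commute ((u : (Module.End K V)ˣ) : Module.End K V) (θ x) := hcomm x
        exact (Commute.sum_right _ _ _ fun k _ => ((hc.pow_right k).smul_right _)).eq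
      · exact Commute.one_right _
      · intro a b _ _ ha hb
        exact ha.mul_right hb
      · intro a _ ha
        exact ha.inv_right
    exact Subtype.ext ((hcent ↑v v.2).eq)
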